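/- Let F_p = F_q[T]/(p) be the residue field of a monic irreducible p ∈ F_q[T] of degree d, and let m(x) ∈ F_p[x] be monic irreducible with m(0) a generator of F_p over F_q (i.e., F_q(m(0)) = F_p). Then the norm Nr_{F_p/F_q}(m(x)) = ∏_{i=0}^{d−1} m^{(q^i)}(x) is irreducible in F_q[x]. -/

import Mathlib

open Polynomial

/-- Any subset of roots of a nonzero polynomial bound. Elements fixed by `x ↦ x^|F|` lie in the
image of `F`. -/
lemma aux_mem_range_of_pow_card {F K : Type*} [Field F] [Fintype F] [Field K] [Algebra F K]
    (c : K) (h : c ^ Fintype.card F = c) : c ∈ Set.range (algebraMap F K) := by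
  classical
  set q := Fintype.card F with hq
  have hq1 : 1 < q := Fintype.one_lt_card
  have hΦne : (X ^ q - X : K[X]) ≠ 0 := FiniteField.X_pow_card_sub_X_ne_zero K hq1
  have hdeg : (X ^ q - X : K[X]).natDegree = q := FiniteField.X_pow_card_sub_X_natDegree_eq K hq1
  by_contra hc
  set s : Finset K := Finset.univ.image (algebraMap F K) with hs
  have hscard : s.card = q := by
    rw [hs, Finset.card_image_of_injective _ (algebraMap F K).injective, Finset.card_univ]
  have hcs : c ∉ s := by
    intro hmem
    rw [hs, Finset.mem_image] at hmem
    obtain ⟨a, -, ha⟩ := hmem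
    exact hc ⟨a, ha⟩
  have hsub : insert c s ⊆ (X ^ q - X : K[X]).roots.toFinset := by
    intro x hx
    rw [Multiset.mem_toFinset, mem_roots hΦne]
    rcases Finset.mem_insert.mp hx with rfl | hxs
    · simp [IsRoot.def, h]
    · rw [hs, Finset.mem_image] at hxs
      obtain ⟨a, -, rfl⟩ := hxs
      simp only [IsRoot.def, eval_sub, eval_pow, eval_X, ← map_pow]
      rw [FiniteField.pow_card, sub_self]
  have h1 : q + 1 ≤ (X ^ q - X : K[X]).roots.toFinset.card := by
    calc q + 1 = (insert c s).card := by rw [Finset.card_insert_of_notMem hcs, hscard]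
    _ ≤ _ := Finset.card_le_card hsub
  have h2 : (X ^ q - X : K[X]).roots.toFinset.card ≤ q := by
    calc (X ^ q - X : K[X]).roots.toFinset.card ≤ (X ^ q - X : K[X]).roots.card :=
          Multiset.toFinset_card_le _
    _ ≤ (X ^ q - X : K[X]).natDegree := card_roots' _
    _ = q := hdeg
  omega

/-- Equality of monic polynomials from divisibility and degree bound, over a field. -/
lemma aux_monic_eq_of_dvd {F : Type*} [Field F] {a b : F[X]} (ha : a.Monic) (hb : b.Monic)
    (hdvd : a ∣ b) (hdeg : b.natDegree ≤ a.natDegree) : a = b := by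
  obtain ⟨c, rfl⟩ := hdvd
  have hc : c ≠ 0 := by
    rintro rfl; simp at hb
  have : c.natDegree = 0 := by
    have := natDegree_mul ha.ne_zero hc ▸ hdeg
    omega
  have hcu : IsUnit c := isUnit_iff.mpr ⟨c.coeff 0, isUnit_iff_ne_zero.mpr (by
      intro h0
      exact hc (by rw [eq_C_of_natDegree_eq_zero this, h0, map_zero])),
    (eq_C_of_natDegree_eq_zero this).symm⟩
  exact eq_of_monic_of_associated ha hb ⟨hcu.unit, by rw [IsUnit.unit_spec]⟩

open Polynomial

theorem norm_of_generator_polynomial_irreducible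
    {F : Type} [Field F] [Fintype F] {q d : ℕ} (hq : Fintype.card F = q)
    (p : Polynomial F) (hpmonic : p.Monic) (hpirr : Irreducible p)
    (hpd : p.natDegree = d) (hd : 0 < d)
    (m : Polynomial (AdjoinRoot p)) (hm : m.Monic) (hmirr : Irreducible m)
    (hgen : Algebra.adjoin F {m.coeff 0} = (⊤ : Subalgebra F (AdjoinRoot p))) :
    ∃ g : Polynomial F,
      g.map (algebraMap F (AdjoinRoot p)) =
        ∏ i ∈ Finset.range d, ∑ j ∈ Finset.range (m.natDegree + 1),
          Polynomial.C ((m.coeff j) ^ q ^ i) * Polynomial.X ^ j ∧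
      Irreducible g := by
  classical
  haveI : Fact (Irreducible p) := ⟨hpirr⟩
  set K := AdjoinRoot p with hK
  have hq2 : 1 < q := hq ▸ Fintype.one_lt_card
  -- characteristic
  obtain ⟨p', hp'⟩ := CharP.exists F
  obtain ⟨s, hp'prime, hcardF⟩ := FiniteField.card F p'
  haveI : Fact p'.Prime := ⟨hp'prime⟩
  have hqs : q = p' ^ (s : ℕ) := hq ▸ hcardF
  haveI : CharP K p' := charP_of_injective_algebraMap (algebraMap F K).injective p'
  haveI : ExpChar K p' := ExpChar.prime hp'prime
  -- finiteness of K
  have hp0 : p ≠ 0 := hpmonic.ne_zero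
  letI : Fintype K := Module.fintypeOfFintype (AdjoinRoot.powerBasis hp0).basis
  have hcardK : Fintype.card K = q ^ d := by
    rw [Module.card_fintype (AdjoinRoot.powerBasis hp0).basis, Fintype.card_fin,
      AdjoinRoot.powerBasis_dim, hpd, hq]
  -- the factors
  set f : ℕ → K[X] := fun i => m.map (iterateFrobenius K p' ((s : ℕ) * i)) with hf
  have hfpow : ∀ (i : ℕ) (c : K), iterateFrobenius K p' ((s : ℕ) * i) c = c ^ q ^ i := by
    intro i c
    rw [iterateFrobenius_def, pow_mul, ← hqs]
  have hfac : ∀ i, (∑ j ∈ Finset.range (m.natDegree + 1),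
      Polynomial.C ((m.coeff j) ^ q ^ i) * Polynomial.X ^ j) = f i := by
    intro i
    show _ = m.map (iterateFrobenius K p' ((s : ℕ) * i))
    conv_rhs => rw [m.as_sum_range' (m.natDegree + 1) (lt_add_one _)]
    rw [Polynomial.map_sum]
    refine Finset.sum_congr rfl fun j _ => ?_
    rw [Polynomial.map_monomial, ← C_mul_X_pow_eq_monomial, hfpow]
  have hf0 : f 0 = m := by
    rw [hf]
    simp only [Nat.mul_zero, iterateFrobenius_zero]
    exact m.map_id
  have hfd : f d = m := by
    show m.map (iterateFrobenius K p' ((s : ℕ) * d)) = m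
    ext n
    rw [coeff_map, hfpow, ← hcardK, FiniteField.pow_card]
  set P : K[X] := ∏ i ∈ Finset.range d, f i with hP
  have hfmonic : ∀ i, (f i).Monic := fun i => hm.map _
  have hPmonic : P.Monic := monic_prod_of_monic _ _ fun i _ => hfmonic i
  -- P is fixed by the q-power Frobenius
  have hPfix : ∀ n, (P.coeff n) ^ q = P.coeff n := by
    have hmap : P.map (iterateFrobenius K p' (s : ℕ)) = P := by
      have key : ∀ i, (f i).map (iterateFrobenius K p' (s : ℕ)) = f (i + 1) := by
        intro i
        rw [hf, map_map, ← iterateFrobenius_add]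
        congr 2
        ring
      calc P.map (iterateFrobenius K p' (s : ℕ))
          = ∏ i ∈ Finset.range d, (f i).map (iterateFrobenius K p' (s : ℕ)) := by
            rw [hP, Polynomial.map_prod]
        _ = ∏ i ∈ Finset.range d, f (i + 1) := Finset.prod_congr rfl fun i _ => key i
        _ = P := by
            have h1 : f 0 * ∏ i ∈ Finset.range d, f (i + 1) = f 0 * P := by
              rw [mul_comm (f 0), ← Finset.prod_range_succ', Finset.prod_range_succ, hfd, ← hf0,
                mul_comm]
            exact mul_left_cancel₀ (hf0 ▸ hm.ne_zero) h1
    intro n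
    conv_rhs => rw [← hmap]
    rw [coeff_map, iterateFrobenius_def, ← hqs]
  -- descend P to F[x]
  obtain ⟨g, hg⟩ : ∃ g : F[X], g.map (algebraMap F K) = P := by
    have hmem : P ∈ Polynomial.lifts (algebraMap F K) := by
      rw [lifts_iff_coeff_lifts]
      intro n
      exact aux_mem_range_of_pow_card _ (by rw [hq]; exact hPfix n)
    exact (mem_lifts _).mp hmem
  refine ⟨g, ?_, ?_⟩
  · rw [hg, hP]
    exact (Finset.prod_congr rfl fun i _ => (hfac i).symm)
  -- the splitting field of m
  haveI : Fact (Irreducible m) := ⟨hmirr⟩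
  set L := AdjoinRoot m with hL
  set α : L := AdjoinRoot.root m with hα
  haveI : CharP L p' := charP_of_injective_algebraMap (algebraMap K L).injective p'
  have hm0 : m ≠ 0 := hm.ne_zero
  letI : Fintype L := Module.fintypeOfFintype (AdjoinRoot.powerBasis hm0).basis
  set e := m.natDegree with he
  have he0 : 0 < e := hmirr.natDegree_pos
  have hcardL : Fintype.card L = q ^ (d * e) := by
    rw [Module.card_fintype (AdjoinRoot.powerBasis hm0).basis, Fintype.card_fin,
      AdjoinRoot.powerBasis_dim, hcardK, ← pow_mul]
  haveI : Module.Finite F K := Module.Finite.of_basis (AdjoinRoot.powerBasis hp0).basis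
  haveI : Module.Finite K L := Module.Finite.of_basis (AdjoinRoot.powerBasis hm0).basis
  haveI : Module.Finite F L := Module.Finite.trans K L
  have hint : IsIntegral F α := IsIntegral.of_finite F α
  have haeval : Polynomial.aeval α m = 0 := by
    rw [Polynomial.aeval_def, AdjoinRoot.algebraMap_eq]
    exact AdjoinRoot.eval₂_root m
  set t := (minpoly F α).natDegree with ht
  have ht0 : 0 < t := minpoly.natDegree_pos hint
  -- α is fixed by the (q^t)-power map
  have hαfix : α ^ q ^ t = α := by
    set E := IntermediateField.adjoin F ({α} : Set L) with hE
    have hαE : α ∈ E := IntermediateField.mem_adjoin_simple_self F α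
    have hfr : Module.finrank F E = t := IntermediateField.adjoin.finrank hint
    letI : Fintype E := Fintype.ofFinite E
    have hcardE : Fintype.card E = q ^ t := by
      rw [Module.card_eq_pow_finrank (K := F) (V := E), hfr, hq]
    have h1 := FiniteField.pow_card (⟨α, hαE⟩ : E)
    rw [hcardE] at h1
    have h2 := congrArg (fun x : E => (x : L)) h1
    simpa using h2
  -- m(0) is fixed by the (q^t)-power map
  have hm0fix : (m.coeff 0) ^ q ^ t = m.coeff 0 := by
    set ψ := iterateFrobenius K p' ((s : ℕ) * t) with hψ
    have hψc : ∀ c : K, ψ c = c ^ q ^ t := hfpow t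
    have hmin : m = minpoly K α := minpoly.eq_of_irreducible_of_monic hmirr haeval hm
    have haeval' : Polynomial.aeval α (m.map ψ) = 0 := by
      rw [Polynomial.aeval_def, eval₂_map]
      set φL := iterateFrobenius L p' ((s : ℕ) * t) with hφL
      have hcomp : (algebraMap K L).comp ψ = φL.comp (algebraMap K L) := by
        refine RingHom.ext fun c => ?_
        simp [hψ, hφL, iterateFrobenius_def, map_pow]
      have hφLα : φL α = α := by
        rw [hφL, iterateFrobenius_def, pow_mul, ← hqs]
        exact hαfix
      rw [hcomp, ← hφLα, ← hom_eval₂, ← Polynomial.aeval_def, haeval, map_zero]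
    have hdvd : minpoly K α ∣ m.map ψ := minpoly.dvd K α haeval'
    rw [← hmin] at hdvd
    have heq : m = m.map ψ := aux_monic_eq_of_dvd hm (hm.map ψ)
      hdvd (le_of_eq (natDegree_map_eq_of_injective ψ.injective m))
    have h0 := congrArg (fun r : K[X] => r.coeff 0) heq
    simp only [coeff_map, hψc] at h0
    exact h0.symm
  -- every element of K is fixed by the (q^t)-power map
  have hqt0 : q ^ t ≠ 0 := pow_ne_zero _ (by omega)
  have hKfix : ∀ c : K, c ^ q ^ t = c := by
    let T : Subalgebra F K :=
      { carrier := {c | c ^ q ^ t = c}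
        mul_mem' := fun {a b} ha hb => by
          simp only [Set.mem_setOf_eq] at *
          rw [mul_pow, ha, hb]
        one_mem' := by simp
        add_mem' := fun {a b} ha hb => by
          simp only [Set.mem_setOf_eq] at *
          rw [hqs, ← pow_mul, add_pow_char_pow, pow_mul, ← hqs, ha, hb]
        zero_mem' := by simp [zero_pow hqt0]
        algebraMap_mem' := fun a => by
          simp only [Set.mem_setOf_eq]
          rw [← map_pow]
          congr 1
          have h1 := FiniteField.pow_card_pow t a
          rwa [hq] at h1 }
    have hsub : Algebra.adjoin F {m.coeff 0} ≤ T :=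
      Algebra.adjoin_le (Set.singleton_subset_iff.mpr hm0fix)
    rw [hgen] at hsub
    exact fun c => hsub (by trivial)
  -- every element of L is fixed by the (q^t)-power map
  have hLfix : ∀ x : L, x ^ q ^ t = x := by
    let S : Subalgebra K L :=
      { carrier := {x | x ^ q ^ t = x}
        mul_mem' := fun {a b} ha hb => by
          simp only [Set.mem_setOf_eq] at *
          rw [mul_pow, ha, hb]
        one_mem' := by simp
        add_mem' := fun {a b} ha hb => by
          simp only [Set.mem_setOf_eq] at *
          rw [hqs, ← pow_mul, add_pow_char_pow, pow_mul, ← hqs, ha, hb]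
        zero_mem' := by simp [zero_pow hqt0]
        algebraMap_mem' := fun c => by
          simp only [Set.mem_setOf_eq]
          rw [← map_pow, hKfix] }
    have hsub : (⊤ : Subalgebra K L) ≤ S := by
      rw [← AdjoinRoot.adjoinRoot_eq_top]
      exact Algebra.adjoin_le (Set.singleton_subset_iff.mpr hαfix)
    exact fun x => hsub (by trivial)
  -- cardinality bound gives d * e ≤ t
  have hdet : d * e ≤ t := by
    have hlt : (1 : ℕ) < q ^ t := Nat.one_lt_pow (by omega) hq2
    have hΦne : (X ^ q ^ t - X : L[X]) ≠ 0 := FiniteField.X_pow_card_sub_X_ne_zero L hlt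
    have hdeg : (X ^ q ^ t - X : L[X]).natDegree = q ^ t :=
      FiniteField.X_pow_card_sub_X_natDegree_eq L hlt
    have hsub : (Finset.univ : Finset L) ⊆ (X ^ q ^ t - X : L[X]).roots.toFinset := by
      intro x _
      rw [Multiset.mem_toFinset, mem_roots hΦne]
      simp [IsRoot.def, hLfix x]
    have hcard : Fintype.card L ≤ q ^ t := by
      calc Fintype.card L = (Finset.univ : Finset L).card := Finset.card_univ.symm
        _ ≤ (X ^ q ^ t - X : L[X]).roots.toFinset.card := Finset.card_le_card hsub
        _ ≤ Multiset.card (X ^ q ^ t - X : L[X]).roots := Multiset.toFinset_card_le _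
        _ ≤ (X ^ q ^ t - X : L[X]).natDegree := card_roots' _
        _ = q ^ t := hdeg
    rw [hcardL] at hcard
    exact (Nat.pow_le_pow_iff_right hq2).mp hcard
  -- conclude
  have hgdvd : minpoly F α ∣ g := by
    apply minpoly.dvd
    have h1 : Polynomial.aeval α (g.map (algebraMap F K)) = Polynomial.aeval α g :=
      Polynomial.aeval_map_algebraMap (A := K) α g
    rw [← h1, hg]
    obtain ⟨r, hr⟩ : m ∣ P := hf0 ▸ Finset.dvd_prod_of_mem f (Finset.mem_range.mpr hd)
    rw [hr, map_mul, haeval, zero_mul]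
  have hgmonic : g.Monic := monic_of_injective (algebraMap F K).injective (hg ▸ hPmonic)
  have hgdeg : g.natDegree = d * e := by
    have h1 : P.natDegree = d * e := by
      rw [hP, natDegree_prod _ _ fun i _ => (hfmonic i).ne_zero,
        Finset.sum_congr rfl fun i _ => natDegree_map_eq_of_injective (RingHom.injective _) m,
        Finset.sum_const, Finset.card_range, smul_eq_mul]
    rw [← natDegree_map_eq_of_injective (algebraMap F K).injective g, hg, h1]
  have htle : t ≤ d * e := by
    rw [← hgdeg]
    exact natDegree_le_of_dvd hgdvd hgmonic.ne_zero
  have hfinal : minpoly F α = g :=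
    aux_monic_eq_of_dvd (minpoly.monic hint) hgmonic hgdvd (by omega)
  rw [← hfinal]
  exact minpoly.irreducible hint
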